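/- arXiv:1412.6020 — 2 statements merged into one kernel-verified Lean document; each statement's English description precedes it below -/
import Mathlib

section
/- Let X be a random variable with values in a measurable space 𝒳, and let b_{K1},…,b_{KK} : 𝒳 → ℝ be measurable functions with Gram matrix G = E[b^K(X) b^K(X)'] positive definite, where b^K(x) = (b_{K1}(x),…,b_{KK}(x))'. Suppose there is a constant c_K > 0 such that (i) sup_{x ∈ 𝒳} Σ_{k=1}^K |b_{Kk}(x)| ≤ c₁ c_K, and (ii) max_{1≤k≤K} E[|b_{Kk}(X)|] ≤ c₂ c_K^{-1}, for positive constants c₁, c₂. Then the L∞ operator norm of the L²(X) orthogonal projection P_K onto the span of b_{K1},…,b_{KK}, defined by P_K f(x) = b^K(x)' G^{-1} E[b^K(X) f(X)], satisfies ‖P_K f‖_∞ ≤ c₁ c₂ ‖G^{-1}‖_{ℓ∞} ‖f‖_∞ for every bounded measurable f, where ‖G^{-1}‖_{ℓ∞} is the maximum row sum of absolute values of G^{-1}. -/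
open MeasureTheory Matrix

/-- **Sup-norm bound for the L² projection via the ℓ∞ norm of the inverse Gram matrix.**
If `sup_x Σ_k |b_k(x)| ≤ c₁ c_K` and `max_k E[|b_k(X)|] ≤ c₂ / c_K`, then the `L²(X)`
orthogonal projection `P_K f(x) = b^K(x)' G⁻¹ E[b^K(X) f(X)]` satisfies
`‖P_K f‖_∞ ≤ c₁ c₂ ‖G⁻¹‖_{ℓ∞} ‖f‖_∞` for every bounded measurable `f`. -/
theorem projection_sup_norm_bound
    {𝒳 : Type*} [MeasurableSpace 𝒳] [Nonempty 𝒳] (μ : Measure 𝒳) [IsProbabilityMeasure μ]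
    {K : ℕ} (hK : 0 < K) (b : Fin K → 𝒳 → ℝ) (hbmeas : ∀ k, Measurable (b k))
    (G : Matrix (Fin K) (Fin K) ℝ)
    (hGdef : ∀ j k : Fin K, G j k = ∫ x, b j x * b k x ∂μ)
    (hG : G.PosDef)
    (cK c₁ c₂ : ℝ) (hcK : 0 < cK) (hc₁ : 0 < c₁) (hc₂ : 0 < c₂)
    (hsum : ∀ x, ∑ k : Fin K, |b k x| ≤ c₁ * cK)
    (hL1 : ∀ k, (∫ x, |b k x| ∂μ) ≤ c₂ / cK)
    (f : 𝒳 → ℝ) (hfmeas : Measurable f)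
    (hfbdd : BddAbove (Set.range fun x => |f x|))
    (hint : ∀ l, Integrable (fun y => b l y * f y) μ) :
    (⨆ x : 𝒳, |(fun k => b k x) ⬝ᵥ G⁻¹.mulVec (fun l => ∫ y, b l y * f y ∂μ)|) ≤
      c₁ * c₂ * (⨆ i : Fin K, ∑ j : Fin K, |G⁻¹ i j|) * (⨆ x : 𝒳, |f x|) := by
  classical
  set v : Fin K → ℝ := fun l => ∫ y, b l y * f y ∂μ with hv
  set F : ℝ := ⨆ x : 𝒳, |f x| with hF
  set M : ℝ := ⨆ i : Fin K, ∑ j : Fin K, |G⁻¹ i j| with hM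
  have hFle : ∀ y, |f y| ≤ F := fun y => le_ciSup hfbdd y
  have hF0 : 0 ≤ F := le_trans (abs_nonneg _) (hFle (Classical.arbitrary 𝒳))
  have hMbdd : BddAbove (Set.range fun i : Fin K => ∑ j : Fin K, |G⁻¹ i j|) :=
    Set.Finite.bddAbove (Set.finite_range _)
  have hMle : ∀ k : Fin K, ∑ j : Fin K, |G⁻¹ k j| ≤ M := fun k => le_ciSup hMbdd k
  have k0 : Fin K := ⟨0, hK⟩
  have hM0 : 0 ≤ M :=
    le_trans (Finset.sum_nonneg fun j _ => abs_nonneg _) (hMle k0)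
  -- integrability of |b l|
  have hbint : ∀ l, Integrable (fun y => |b l y|) μ := by
    intro l
    refine Integrable.mono (integrable_const (c₁ * cK)) ((hbmeas l).abs.aestronglyMeasurable) ?_
    filter_upwards with y
    have h1 : |b l y| ≤ ∑ k : Fin K, |b k y| :=
      Finset.single_le_sum (f := fun k => |b k y|) (fun k _ => abs_nonneg _) (Finset.mem_univ l)
    rw [Real.norm_eq_abs, Real.norm_eq_abs, abs_abs]
    calc |b l y| ≤ ∑ k : Fin K, |b k y| := h1
      _ ≤ c₁ * cK := hsum y
      _ ≤ |c₁ * cK| := le_abs_self _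
  -- bound on |v l|
  have hvle : ∀ l, |v l| ≤ (c₂ / cK) * F := by
    intro l
    have h1 : |v l| ≤ ∫ y, |b l y| * |f y| ∂μ := by
      simpa [Real.norm_eq_abs] using
        norm_integral_le_integral_norm (f := fun y => b l y * f y) (μ := μ)
    have h2 : (∫ y, |b l y| * |f y| ∂μ) ≤ ∫ y, |b l y| * F ∂μ := by
      refine integral_mono (by simpa [abs_mul] using (hint l).abs) ((hbint l).mul_const F) ?_
      intro y
      show |b l y| * |f y| ≤ |b l y| * F
      exact mul_le_mul_of_nonneg_left (hFle y) (abs_nonneg _)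
    have h3 : (∫ y, |b l y| * F ∂μ) = (∫ y, |b l y| ∂μ) * F := integral_mul_const F _
    calc |v l| ≤ ∫ y, |b l y| * F ∂μ := le_trans h1 h2
      _ = (∫ y, |b l y| ∂μ) * F := h3
      _ ≤ (c₂ / cK) * F := mul_le_mul_of_nonneg_right (hL1 l) hF0
  have hmv : ∀ k : Fin K, |G⁻¹.mulVec v k| ≤ M * ((c₂ / cK) * F) := by
    intro k
    have h1 : |∑ l : Fin K, G⁻¹ k l * v l| ≤ ∑ l : Fin K, |G⁻¹ k l| * |v l| := by
      refine le_trans (Finset.abs_sum_le_sum_abs _ _) ?_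
      exact le_of_eq (Finset.sum_congr rfl fun l _ => abs_mul _ _)
    have h2 : ∑ l : Fin K, |G⁻¹ k l| * |v l| ≤ ∑ l : Fin K, |G⁻¹ k l| * ((c₂ / cK) * F) :=
      Finset.sum_le_sum fun l _ => mul_le_mul_of_nonneg_left (hvle l) (abs_nonneg _)
    have h3 : ∑ l : Fin K, |G⁻¹ k l| * ((c₂ / cK) * F) = (∑ l : Fin K, |G⁻¹ k l|) * ((c₂ / cK) * F) :=
      (Finset.sum_mul _ _ _).symm
    have h4 : (∑ l : Fin K, |G⁻¹ k l|) * ((c₂ / cK) * F) ≤ M * ((c₂ / cK) * F) := by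
      refine mul_le_mul_of_nonneg_right (hMle k) ?_
      positivity
    calc |G⁻¹.mulVec v k| = |∑ l : Fin K, G⁻¹ k l * v l| := by
          simp [Matrix.mulVec, dotProduct]
      _ ≤ ∑ l : Fin K, |G⁻¹ k l| * |v l| := h1
      _ ≤ ∑ l : Fin K, |G⁻¹ k l| * ((c₂ / cK) * F) := h2
      _ = (∑ l : Fin K, |G⁻¹ k l|) * ((c₂ / cK) * F) := h3
      _ ≤ M * ((c₂ / cK) * F) := h4
  refine ciSup_le fun x => ?_
  have h1 : |(fun k => b k x) ⬝ᵥ G⁻¹.mulVec v| ≤ ∑ k : Fin K, |b k x| * (M * ((c₂ / cK) * F)) := by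
    refine le_trans (Finset.abs_sum_le_sum_abs _ _) (Finset.sum_le_sum fun k _ => ?_)
    rw [abs_mul]
    exact mul_le_mul_of_nonneg_left (hmv k) (abs_nonneg _)
  have h2 : ∑ k : Fin K, |b k x| * (M * ((c₂ / cK) * F)) =
      (∑ k : Fin K, |b k x|) * (M * ((c₂ / cK) * F)) := (Finset.sum_mul _ _ _).symm
  have h3 : (∑ k : Fin K, |b k x|) * (M * ((c₂ / cK) * F)) ≤ (c₁ * cK) * (M * ((c₂ / cK) * F)) := by
    refine mul_le_mul_of_nonneg_right (hsum x) ?_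
    positivity
  have h4 : (c₁ * cK) * (M * ((c₂ / cK) * F)) = c₁ * c₂ * M * F := by
    field_simp
  calc |(fun k => b k x) ⬝ᵥ G⁻¹.mulVec v|
      ≤ ∑ k : Fin K, |b k x| * (M * ((c₂ / cK) * F)) := h1
    _ = (∑ k : Fin K, |b k x|) * (M * ((c₂ / cK) * F)) := h2
    _ ≤ (c₁ * cK) * (M * ((c₂ / cK) * F)) := h3
    _ = c₁ * c₂ * M * F := h4
end

section
/- Under the hypotheses of the β-mixing matrix exponential inequality (mean-zero matrix-valued functions Ξ_{i,n} = Ξ_n(X_i) of a β-mixing sequence with ‖Ξ_{i,n}‖ ≤ R_n and cross-moment bound s_n²), if q = q(n) ≤ n/2 is chosen so that (n/q)β(q) = o(1) and R_n √(q log(d₁+d₂)) = o(s_n √n), then ‖Σ_{i=1}^n Ξ_{i,n}‖ = O_p( s_n √(n q log(d₁+d₂)) ). -/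
set_option maxHeartbeats 1000000


open MeasureTheory Matrix Filter
open scoped Matrix.Norms.L2Operator Asymptotics

/-- **Rate corollary of the β-mixing matrix exponential inequality.**
If `q = q(n) ≤ n/2` is chosen so that `(n/q)β(q) = o(1)` and
`R_n √(q log(d₁+d₂)) = o(s_n √n)`, then, given the Bernstein-type tail bound for β-mixing
sequences (with remainder block `I_r` of fewer than `q` terms each bounded by `R_n`),
`‖Σ_{i=1}^n Ξ_{i,n}‖ = O_p(s_n √(n q log(d₁+d₂)))`. -/
theorem beta_mixing_matrix_rate
    (Ω : ℕ → Type*) [∀ n, MeasurableSpace (Ω n)]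
    (μ : ∀ n, Measure (Ω n)) [∀ n, IsProbabilityMeasure (μ n)]
    (d₁ d₂ : ℕ → ℕ) (hd : ∀ n, 2 ≤ d₁ n + d₂ n)
    (Ξ : ∀ n, Fin n → Ω n → Matrix (Fin (d₁ n)) (Fin (d₂ n)) ℝ)
    (hmean : ∀ n i, (∫ ω, Ξ n i ω ∂(μ n)) = 0)
    (R s β : ℕ → ℝ) (q : ℕ → ℕ)
    (hR0 : ∀ n, 0 ≤ R n) (hspos : ∀ n, 0 < s n) (hβ0 : ∀ n, 0 ≤ β n)
    (hq : ∀ᶠ n in atTop, 1 ≤ q n ∧ 2 * q n ≤ n)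
    (hRbd : ∀ n i ω, ‖Ξ n i ω‖ ≤ R n)
    (htail : ∀ n, ∀ t : ℝ, 0 ≤ t →
      ((μ n) {ω | 6 * t ≤ ‖∑ i : Fin n, Ξ n i ω‖}).toReal ≤
        ((n : ℝ) / q n) * β n +
        ((μ n) {ω | t ≤ ‖∑ i ∈ Finset.univ.filter
            (fun i : Fin n => q n * (n / q n) ≤ i.val), Ξ n i ω‖}).toReal +
        2 * ((d₁ n : ℝ) + d₂ n) *
          Real.exp (-(t ^ 2 / 2) / ((n : ℝ) * q n * s n ^ 2 + q n * R n * t / 3)))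
    (hmix : Tendsto (fun n : ℕ => ((n : ℝ) / q n) * β n) atTop (nhds 0))
    (hsmall : (fun n : ℕ => R n * Real.sqrt ((q n : ℝ) * Real.log ((d₁ n : ℝ) + d₂ n)))
      =o[atTop] (fun n : ℕ => s n * Real.sqrt n)) :
    ∀ ε : ℝ, 0 < ε → ∃ C : ℝ, 0 < C ∧
      Filter.limsup (fun n : ℕ =>
          ((μ n) {ω | C * (s n * Real.sqrt ((n : ℝ) * q n * Real.log ((d₁ n : ℝ) + d₂ n))) ≤
            ‖∑ i : Fin n, Ξ n i ω‖}).toReal) atTop ≤ ε := by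
  intro ε hε
  have hlog2 : (0:ℝ) < Real.log 2 := Real.log_pos one_lt_two
  set K : ℝ := 4 + |Real.log ε| / Real.log 2 with hKdef
  have hK4 : (4:ℝ) ≤ K := by
    have h0 : (0:ℝ) ≤ |Real.log ε| / Real.log 2 := div_nonneg (abs_nonneg _) hlog2.le
    rw [hKdef]; linarith
  set C : ℝ := 12 * Real.sqrt K with hCdef
  have hC0 : 0 < C := by
    have h1 : 0 < Real.sqrt K := Real.sqrt_pos.2 (by linarith)
    rw [hCdef]; positivity
  have hC2 : C ^ 2 = 144 * K := by
    rw [hCdef, mul_pow, Real.sq_sqrt (by linarith)]; ring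
  clear_value K C
  refine ⟨C, hC0, ?_⟩
  have hc1 : (0:ℝ) < C / 12 * Real.log 2 :=
    mul_pos (div_pos hC0 (by norm_num)) hlog2
  have hc2 : (0:ℝ) < 18 / C := div_pos (by norm_num) hC0
  -- key: exp(-|log ε|) ≤ ε
  have hexpeps : Real.exp (-|Real.log ε|) ≤ ε := by
    rcases le_or_gt (Real.log ε) 0 with h | h
    · rw [abs_of_nonpos h, neg_neg, Real.exp_log hε]
    · rw [abs_of_pos h]
      have h1 : 1 < ε := by
        by_contra hc
        push_neg at hc
        have := Real.log_nonpos (by linarith) hc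
        linarith
      calc Real.exp (-Real.log ε) = ε⁻¹ := by rw [Real.exp_neg, Real.exp_log hε]
        _ ≤ 1 := by rw [inv_le_one_iff₀]; right; linarith
        _ ≤ ε := h1.le
  have Hev : ∀ᶠ n in atTop,
      ((μ n) {ω | C * (s n * Real.sqrt ((n : ℝ) * q n *
          Real.log ((d₁ n : ℝ) + d₂ n))) ≤ ‖∑ i : Fin n, Ξ n i ω‖}).toReal ≤ ε := by
    filter_upwards [hq, hsmall.def hc1, hsmall.def hc2,
      hmix.eventually_lt_const (by linarith : (0:ℝ) < ε / 2)] with n hqn h1 h2 hm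
    have hm' : (n : ℝ) / q n * β n < ε / 2 := hm
    obtain ⟨hq1, hq2⟩ := hqn
    have hn2 : 2 ≤ n := by omega
    have hs := hspos n
    have hR := hR0 n
    have hq0 : (0:ℝ) < q n := by exact_mod_cast hq1
    have hn0 : (0:ℝ) < n := by exact_mod_cast (by omega : 0 < n)
    set d : ℝ := (d₁ n : ℝ) + d₂ n with hdd
    have hd2 : (2:ℝ) ≤ d := by
      rw [hdd]; exact_mod_cast hd n
    set L : ℝ := Real.log d with hLdef
    have hL2 : Real.log 2 ≤ L := by rw [hLdef]; exact Real.log_le_log two_pos hd2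
    have hL0 : 0 < L := lt_of_lt_of_le hlog2 hL2
    set u : ℝ := Real.sqrt (q n) with hu
    set v : ℝ := Real.sqrt L with hv
    set w : ℝ := Real.sqrt n with hw
    set l : ℝ := Real.sqrt (Real.log 2) with hl
    have hu0 : 0 < u := Real.sqrt_pos.2 hq0
    have hv0 : 0 < v := Real.sqrt_pos.2 hL0
    have hw0 : 0 < w := Real.sqrt_pos.2 hn0
    have hl0 : 0 < l := Real.sqrt_pos.2 hlog2
    have huu : u * u = q n := Real.mul_self_sqrt hq0.le
    have hvv : v * v = L := Real.mul_self_sqrt hL0.le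
    have hww : w * w = n := Real.mul_self_sqrt hn0.le
    have hll : l * l = Real.log 2 := Real.mul_self_sqrt hlog2.le
    have hlv : l ≤ v := by rw [hl, hv]; exact Real.sqrt_le_sqrt hL2
    have hsplit : Real.sqrt ((n : ℝ) * q n * L) = w * u * v := by
      rw [Real.sqrt_mul (by positivity), Real.sqrt_mul hn0.le, ← hu, ← hv, ← hw]
    have hsplit2 : Real.sqrt ((q n : ℝ) * L) = u * v := by
      rw [Real.sqrt_mul hq0.le, ← hu, ← hv]
    clear_value d L u v w l
    set t : ℝ := C / 6 * (s n * (w * u * v)) with htdef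
    have ht0 : 0 < t := by rw [htdef]; positivity
    clear_value t
    -- clean up the littleo bounds
    rw [Real.norm_eq_abs, Real.norm_eq_abs, abs_of_nonneg (by positivity),
      abs_of_nonneg (by positivity), hsplit2] at h1
    rw [Real.norm_eq_abs, Real.norm_eq_abs, abs_of_nonneg (by positivity),
      abs_of_nonneg (by positivity), hsplit2] at h2
    -- h1 : R n * (u * v) ≤ C / 12 * Real.log 2 * (s n * w)
    -- q R ≤ t / 2
    have hRuv1 : R n * (u * v) ≤ C / 12 * (l * l) * (s n * w) := by rw [hll]; exact h1
    have hqR : (q n : ℝ) * R n ≤ t / 2 := by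
      have step1 : R n * u * l ≤ R n * (u * v) := by
        have h := mul_le_mul_of_nonneg_left hlv (mul_nonneg hR hu0.le)
        exact h.trans_eq (mul_assoc _ _ _)
      have step2 : R n * u * l ≤ C / 12 * (l * l) * (s n * w) := step1.trans hRuv1
      have step3 : R n * u ≤ C / 12 * l * (s n * w) := by
        rw [← mul_le_mul_iff_of_pos_right hl0]
        calc R n * u * l ≤ C / 12 * (l * l) * (s n * w) := step2
          _ = C / 12 * l * (s n * w) * l := by ring
      have step4 : u * (R n * u) ≤ u * (C / 12 * l * (s n * w)) :=
        mul_le_mul_of_nonneg_left step3 hu0.le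
      have step5 : u * (C / 12 * l * (s n * w)) ≤ u * (C / 12 * v * (s n * w)) := by
        refine mul_le_mul_of_nonneg_left ?_ hu0.le
        refine mul_le_mul_of_nonneg_right ?_ (mul_nonneg hs.le hw0.le)
        exact mul_le_mul_of_nonneg_left hlv (div_nonneg hC0.le (by norm_num))
      have hqRu : (q n : ℝ) * R n = u * (R n * u) := by rw [← huu]; ring
      rw [hqRu, htdef]
      calc u * (R n * u) ≤ u * (C / 12 * v * (s n * w)) := step4.trans step5
        _ = C / 6 * (s n * (w * u * v)) / 2 := by ring
    -- R t ≤ 3 n s²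
    have hRt : R n * t ≤ 3 * (n : ℝ) * s n ^ 2 := by
      have hmul : C / 6 * (s n * w) * (R n * (u * v)) ≤
          C / 6 * (s n * w) * (18 / C * (s n * w)) :=
        mul_le_mul_of_nonneg_left h2 (by positivity)
      have hexp : C / 6 * (s n * w) * (18 / C * (s n * w)) = 3 * (w * w) * s n ^ 2 := by
        field_simp [hC0.ne']
        ring
      rw [hexp, hww] at hmul
      calc R n * t = C / 6 * (s n * w) * (R n * (u * v)) := by rw [htdef]; ring
        _ ≤ 3 * (n : ℝ) * s n ^ 2 := hmul
    -- denominator bound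
    set D : ℝ := (n : ℝ) * q n * s n ^ 2 + q n * R n * t / 3 with hD
    have hD1 : (n : ℝ) * q n * s n ^ 2 ≤ D := by
      have : 0 ≤ (q n : ℝ) * R n * t / 3 := by
        have := mul_nonneg (mul_nonneg hq0.le hR) ht0.le
        linarith
      rw [hD]; linarith
    have hD0 : 0 < D := lt_of_lt_of_le (by positivity) hD1
    have hD2 : D ≤ 2 * ((n : ℝ) * q n * s n ^ 2) := by
      have hh := mul_le_mul_of_nonneg_left hRt hq0.le
      have h3 : (q n : ℝ) * R n * t / 3 ≤ (n : ℝ) * q n * s n ^ 2 := by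
        calc (q n : ℝ) * R n * t / 3 = (q n : ℝ) * (R n * t) / 3 := by ring
          _ ≤ (q n : ℝ) * (3 * (n : ℝ) * s n ^ 2) / 3 := by linarith [hh]
          _ = (n : ℝ) * q n * s n ^ 2 := by ring
      rw [hD]
      linarith
    clear_value D
    -- t² / 2
    have ht2 : t ^ 2 / 2 = C ^ 2 / 72 * (s n ^ 2 * ((n : ℝ) * q n * L)) := by
      have hX : (w * u * v) * (w * u * v) = (n : ℝ) * q n * L := by
        calc (w * u * v) * (w * u * v) = (w * w) * (u * u) * (v * v) := by ring
          _ = (n : ℝ) * q n * L := by rw [hww, huu, hvv]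
      rw [htdef]
      calc (C / 6 * (s n * (w * u * v))) ^ 2 / 2
          = C ^ 2 / 72 * (s n ^ 2 * ((w * u * v) * (w * u * v))) := by ring
        _ = C ^ 2 / 72 * (s n ^ 2 * ((n : ℝ) * q n * L)) := by rw [hX]
    -- exponent bound
    have hexple : -(t ^ 2 / 2) / D ≤ -(K * L) := by
      have h0 : (0:ℝ) ≤ t ^ 2 / 2 := by positivity
      have key : t ^ 2 / 2 / (2 * ((n : ℝ) * q n * s n ^ 2)) ≤ t ^ 2 / 2 / D :=
        div_le_div_of_nonneg_left h0 hD0 hD2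
      have heq : t ^ 2 / 2 / (2 * ((n : ℝ) * q n * s n ^ 2)) = C ^ 2 / 144 * L := by
        rw [ht2]
        field_simp [hs.ne', hn0.ne', hq0.ne']
        ring
      rw [heq] at key
      have hKK : C ^ 2 / 144 * L = K * L := by rw [hC2]; ring
      rw [hKK] at key
      calc -(t ^ 2 / 2) / D = -(t ^ 2 / 2 / D) := by ring
        _ ≤ -(K * L) := neg_le_neg key
    -- the exponential term is small
    have hd0 : (0:ℝ) < d := by linarith
    have hexpterm : 2 * d * Real.exp (-(t ^ 2 / 2) / D) ≤ ε / 2 := by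
      have e1 : Real.exp (-(t ^ 2 / 2) / D) ≤ Real.exp (-(K * L)) := Real.exp_le_exp.2 hexple
      have e2 : Real.exp (-(K * L)) = d ^ (-K : ℝ) := by
        rw [Real.rpow_def_of_pos hd0, hLdef]
        congr 1
        ring
      have hdK : (0:ℝ) < d ^ (K : ℝ) := Real.rpow_pos_of_pos hd0 K
      have e3 : 2 * d * d ^ (-K : ℝ) = 2 * d ^ (1 - K : ℝ) := by
        rw [Real.rpow_sub hd0, Real.rpow_one, Real.rpow_neg hd0.le]
        field_simp
      have e4 : d ^ (1 - K : ℝ) ≤ (2:ℝ) ^ (1 - K : ℝ) :=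
        Real.rpow_le_rpow_of_nonpos two_pos hd2 (by linarith)
      have e5 : (2:ℝ) * (2:ℝ) ^ (1 - K : ℝ) = (2:ℝ) ^ (2 - K : ℝ) := by
        rw [show (2 - K : ℝ) = 1 + (1 - K) by ring, Real.rpow_add two_pos, Real.rpow_one]
      have e6 : (2:ℝ) ^ (2 - K : ℝ) ≤ ε / 2 := by
        rw [Real.rpow_def_of_pos two_pos]
        have harg : Real.log 2 * (2 - K) = -(2 * Real.log 2) + -|Real.log ε| := by
          rw [hKdef]
          field_simp
          ring
        rw [harg, Real.exp_add]
        have h4 : Real.exp (-(2 * Real.log 2)) = 1 / 4 := by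
          rw [show (2:ℝ) * Real.log 2 = Real.log 2 + Real.log 2 by ring, neg_add,
            Real.exp_add, Real.exp_neg, Real.exp_log two_pos]
          norm_num
        rw [h4]
        linarith [hexpeps, (Real.exp_pos (-|Real.log ε|)).le]
      calc 2 * d * Real.exp (-(t ^ 2 / 2) / D)
          ≤ 2 * d * Real.exp (-(K * L)) :=
            mul_le_mul_of_nonneg_left e1 (by positivity)
        _ = 2 * d ^ (1 - K : ℝ) := by rw [e2, e3]
        _ ≤ 2 * (2:ℝ) ^ (1 - K : ℝ) := by linarith [e4]
        _ = (2:ℝ) ^ (2 - K : ℝ) := e5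
        _ ≤ ε / 2 := e6
    -- remainder probability is zero
    have hrem : ((μ n) {ω | t ≤ ‖∑ i ∈ Finset.univ.filter
        (fun i : Fin n => q n * (n / q n) ≤ i.val), Ξ n i ω‖}).toReal = 0 := by
      have hempty : {ω | t ≤ ‖∑ i ∈ Finset.univ.filter
          (fun i : Fin n => q n * (n / q n) ≤ i.val), Ξ n i ω‖} = (∅ : Set (Ω n)) := by
        apply Set.eq_empty_iff_forall_notMem.2
        intro ω hω
        simp only [Set.mem_setOf_eq] at hω
        set F := Finset.univ.filter (fun i : Fin n => q n * (n / q n) ≤ i.val) with hF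
        have hmoddiv := Nat.mod_add_div n (q n)
        have hcard : F.card ≤ q n := by
          have hinj : F.card ≤ (Finset.range (n % q n)).card := by
            apply Finset.card_le_card_of_injOn (fun i => i.val - q n * (n / q n))
            · intro i hi
              simp only [hF, Finset.mem_coe, Finset.mem_filter, Finset.mem_univ, true_and] at hi
              simp only [Finset.mem_coe, Finset.mem_range]
              have h1 : i.val < n := i.isLt
              omega
            · intro i hi j hj hij
              simp only [hF, Finset.coe_filter, Finset.mem_univ, true_and,
                Set.mem_setOf_eq] at hi hj
              dsimp only at hij
              have : i.val = j.val := by omega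
              exact Fin.ext this
          rw [Finset.card_range] at hinj
          exact hinj.trans (Nat.mod_lt n hq1).le
        have hsum : ‖∑ i ∈ F, Ξ n i ω‖ ≤ (F.card : ℝ) * R n := by
          calc ‖∑ i ∈ F, Ξ n i ω‖ ≤ ∑ i ∈ F, ‖Ξ n i ω‖ := norm_sum_le _ _
            _ ≤ ∑ _i ∈ F, R n := Finset.sum_le_sum fun i _ => hRbd n i ω
            _ = (F.card : ℝ) * R n := by rw [Finset.sum_const, nsmul_eq_mul]
        have hc : (F.card : ℝ) ≤ (q n : ℝ) := by exact_mod_cast hcard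
        have hfin : ‖∑ i ∈ F, Ξ n i ω‖ ≤ t / 2 := by
          calc ‖∑ i ∈ F, Ξ n i ω‖ ≤ (F.card : ℝ) * R n := hsum
            _ ≤ (q n : ℝ) * R n := mul_le_mul_of_nonneg_right hc hR
            _ ≤ t / 2 := hqR
        linarith
      rw [hempty, measure_empty]
      simp
    -- assemble
    have key := htail n t ht0.le
    rw [show (6:ℝ) * t = C * (s n * (w * u * v)) from by rw [htdef]; ring,
      hrem, ← hdd, ← hD] at key
    have hgoal : C * (s n * Real.sqrt ((n : ℝ) * q n * L)) = C * (s n * (w * u * v)) := by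
      rw [hsplit]
    rw [hgoal]
    calc ((μ n) {ω | C * (s n * (w * u * v)) ≤ ‖∑ i : Fin n, Ξ n i ω‖}).toReal
        ≤ (n : ℝ) / q n * β n + 0 + 2 * d * Real.exp (-(t ^ 2 / 2) / D) := key
      _ ≤ ε / 2 + 0 + ε / 2 := by
          have h2' := hexpterm
          gcongr
      _ = ε := by ring
  exact Filter.limsup_le_of_le
    (Filter.isCoboundedUnder_le_of_le atTop (fun n => ENNReal.toReal_nonneg))
    Hev
end
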